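/- The rarefaction branch function f_R(p₁₁) = c_R((p₁₁/p₁₁,R)^{1/3} − 1) for 0 < p₁₁ ≤ p₁₁,R, with c_R=√(3p₁₁,R/ρ_R), is strictly increasing and negative for p₁₁ < p₁₁,R, and the full function f(p₁₁) = f_L(p₁₁) + f_R(p₁₁) + u₁,R − u₁,L (with f_L, f_R each being the shock branch above their respective reference pressure and the rarefaction branch below) is continuous and strictly increasing on (0,∞). -/
import Mathlib


open Set

private lemma branch_strictMono (ρ p₀ : ℝ) (hρ : 0 < ρ) (hp₀ : 0 < p₀) :
    StrictMonoOn (fun p => if p ≤ p₀ then Real.sqrt (3 * p₀ / ρ) * ((p / p₀) ^ ((1:ℝ)/3) - 1)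
      else (p - p₀) / Real.sqrt (ρ * (2 * p + p₀))) (Ioi 0) := by
  have hc : 0 < Real.sqrt (3 * p₀ / ρ) :=
    Real.sqrt_pos.2 (by positivity)
  intro a ha b hb hab
  simp only [mem_Ioi] at ha hb
  by_cases hbp : b ≤ p₀
  · have hap : a ≤ p₀ := le_of_lt (lt_of_lt_of_le hab hbp)
    simp only [if_pos hap, if_pos hbp]
    have : (a / p₀) ^ ((1:ℝ)/3) < (b / p₀) ^ ((1:ℝ)/3) :=
      Real.rpow_lt_rpow (by positivity) (by gcongr) (by norm_num)
    nlinarith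
  · push_neg at hbp
    have hsb : 0 < Real.sqrt (ρ * (2 * b + p₀)) := Real.sqrt_pos.2 (by nlinarith)
    have hgb : 0 < (b - p₀) / Real.sqrt (ρ * (2 * b + p₀)) :=
      div_pos (by linarith) hsb
    by_cases hap : a ≤ p₀
    · simp only [if_pos hap, if_neg (not_le.2 hbp)]
      have h1 : (a / p₀) ^ ((1:ℝ)/3) ≤ 1 :=
        Real.rpow_le_one (by positivity) (by rw [div_le_one hp₀]; exact hap) (by norm_num)
      calc Real.sqrt (3 * p₀ / ρ) * ((a / p₀) ^ ((1:ℝ)/3) - 1) ≤ 0 := by nlinarith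
        _ < _ := hgb
    · push_neg at hap
      simp only [if_neg (not_le.2 hap), if_neg (not_le.2 hbp)]
      have hsa : 0 < Real.sqrt (ρ * (2 * a + p₀)) := Real.sqrt_pos.2 (by nlinarith)
      rw [div_lt_div_iff₀ hsa hsb]
      have h2 : ((a - p₀) * Real.sqrt (ρ * (2 * b + p₀))) ^ 2
          < ((b - p₀) * Real.sqrt (ρ * (2 * a + p₀))) ^ 2 := by
        rw [mul_pow, mul_pow, Real.sq_sqrt (by nlinarith), Real.sq_sqrt (by nlinarith)]
        have h3 : 0 < 2 * (a - p₀) * (b - p₀) + 3 * p₀ * ((a - p₀) + (b - p₀)) := by nlinarith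
        nlinarith [mul_pos (mul_pos hρ (sub_pos.2 hab)) h3]
      exact lt_of_pow_lt_pow_left₀ 2
        (mul_nonneg (by linarith) (Real.sqrt_nonneg _)) h2

private lemma branch_cont (ρ p₀ : ℝ) (hρ : 0 < ρ) (hp₀ : 0 < p₀) :
    ContinuousOn (fun p => if p ≤ p₀ then Real.sqrt (3 * p₀ / ρ) * ((p / p₀) ^ ((1:ℝ)/3) - 1)
      else (p - p₀) / Real.sqrt (ρ * (2 * p + p₀))) (Ioi 0) := by
  set c := Real.sqrt (3 * p₀ / ρ)
  set g1 : ℝ → ℝ := fun p => c * ((p / p₀) ^ ((1:ℝ)/3) - 1) with hg1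
  set g2 : ℝ → ℝ := fun p => (p - p₀) / Real.sqrt (ρ * (2 * p + p₀)) with hg2
  set g : ℝ → ℝ := fun p => if p ≤ p₀ then g1 p else g2 p with hg
  have hcont1 : Continuous g1 := by
    apply Continuous.mul continuous_const
    apply Continuous.sub _ continuous_const
    exact (continuous_id.div_const p₀).rpow_const (fun x => Or.inr (by norm_num))
  have hcont2 : ∀ x : ℝ, 0 < 2 * x + p₀ → ContinuousAt g2 x := by
    intro x hx
    apply ContinuousAt.div (by fun_prop) (by fun_prop)
    exact ne_of_gt (Real.sqrt_pos.2 (by positivity))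
  have heq : g p₀ = g2 p₀ := by
    simp [hg, hg1, hg2, div_self (ne_of_gt hp₀), Real.one_rpow]
  intro x hx
  rcases lt_trichotomy x p₀ with h | h | h
  · have : g =ᶠ[nhds x] g1 :=
      Filter.eventuallyEq_of_mem (Iio_mem_nhds h) (fun p hp => if_pos (le_of_lt hp))
    exact (hcont1.continuousAt.congr this.symm).continuousWithinAt
  · subst h
    have h1 : ContinuousWithinAt g (Iic x) x := by
      apply (hcont1.continuousAt.continuousWithinAt).congr
      · intro p hp; exact if_pos hp
      · exact if_pos le_rfl
    have h2 : ContinuousWithinAt g (Ici x) x := by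
      apply ((hcont2 x (by linarith)).continuousWithinAt).congr
      · intro p hp
        rcases eq_or_lt_of_le (mem_Ici.1 hp) with h' | h'
        · rw [← h']; exact heq
        · exact if_neg (not_le.2 h')
      · exact heq
    have := h1.union h2
    apply this.mono
    intro p _; exact le_total p x
  · have : g =ᶠ[nhds x] g2 := by
      apply Filter.eventuallyEq_of_mem (Ioi_mem_nhds h)
      intro p hp; exact if_neg (not_le.2 hp)
    exact (((hcont2 x (by linarith)).congr this.symm)).continuousWithinAt

/-- The rarefaction branch of f_R is strictly increasing and negative below
p₁₁,R, and the full Riemann function f is continuous and strictly increasing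
on (0,∞). -/
theorem riemann_function_strictMono (ρL p₁₁L ρR p₁₁R u₁L u₁R : ℝ)
    (hρL : 0 < ρL) (hpL : 0 < p₁₁L) (hρR : 0 < ρR) (hpR : 0 < p₁₁R) :
    let cL := Real.sqrt (3 * p₁₁L / ρL)
    let cR := Real.sqrt (3 * p₁₁R / ρR)
    let fL : ℝ → ℝ := fun p =>
      if p ≤ p₁₁L then cL * ((p / p₁₁L) ^ ((1:ℝ)/3) - 1)
      else (p - p₁₁L) / Real.sqrt (ρL * (2 * p + p₁₁L))
    let fR : ℝ → ℝ := fun p =>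
      if p ≤ p₁₁R then cR * ((p / p₁₁R) ^ ((1:ℝ)/3) - 1)
      else (p - p₁₁R) / Real.sqrt (ρR * (2 * p + p₁₁R))
    let f : ℝ → ℝ := fun p => fL p + fR p + u₁R - u₁L
    StrictMonoOn fR (Ioc 0 p₁₁R) ∧
    (∀ p : ℝ, 0 < p → p < p₁₁R → fR p < 0) ∧
    ContinuousOn f (Ioi 0) ∧
    StrictMonoOn f (Ioi 0) := by
  intro cL cR fL fR f
  have hmL := branch_strictMono ρL p₁₁L hρL hpL
  have hmR := branch_strictMono ρR p₁₁R hρR hpR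
  have hcL := branch_cont ρL p₁₁L hρL hpL
  have hcR := branch_cont ρR p₁₁R hρR hpR
  refine ⟨hmR.mono Ioc_subset_Ioi_self, ?_, ?_, ?_⟩
  · intro p hp hplt
    have hcpos : 0 < cR := Real.sqrt_pos.2 (by positivity)
    have h1 : (p / p₁₁R) ^ ((1:ℝ)/3) < 1 :=
      Real.rpow_lt_one (by positivity) (by rw [div_lt_one hpR]; exact hplt) (by norm_num)
    simp only [fR, if_pos hplt.le]
    nlinarith
  · exact ((hcL.add hcR).add continuousOn_const).sub continuousOn_const
  · intro a ha b hb hab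
    have h1 := hmL ha hb hab
    have h2 := hmR ha hb hab
    simp only [f]
    dsimp at h1 h2 ⊢
    linarith
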